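/- Let β > 0, Λ > 0, C > 0, and let ε : {1,2,...} → ℝ satisfy ε_k > 0 and |ε_k − π²k²/Λ²| ≤ C for all k ≥ 1. Then Σ_{k=1}^∞ ln(1 + e^{β(μ−ε_k)}) ∼ (2βΛ/(3π)) μ^{3/2} as μ → ∞; that is, the ratio of the left-hand side to (2βΛ/(3π)) μ^{3/2} tends to 1. -/

import Mathlib

open Real Filter Topology

private lemma sum_sq' (N : ℕ) :
    ∑ n ∈ Finset.range N, ((n : ℝ) + 1) ^ 2 = (N:ℝ) * ((N:ℝ) + 1) * (2 * (N:ℝ) + 1) / 6 := by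
  induction N with
  | zero => simp
  | succ n ih => rw [Finset.sum_range_succ, ih]; push_cast; ring

private lemma log_le_exp' (x : ℝ) : Real.log (1 + Real.exp x) ≤ Real.exp x := by
  have h1 : (0:ℝ) < 1 + Real.exp x := by positivity
  rw [Real.log_le_iff_le_exp h1]
  have := Real.add_one_le_exp (Real.exp x)
  linarith

private lemma log_le_max' (x : ℝ) : Real.log (1 + Real.exp x) ≤ Real.log 2 + max x 0 := by
  have h3 : Real.exp x ≤ Real.exp (max x 0) := Real.exp_le_exp.2 (le_max_left _ _)
  have h4 : (1:ℝ) ≤ Real.exp (max x 0) := by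
    rw [← Real.exp_zero]; exact Real.exp_le_exp.2 (le_max_right _ _)
  calc Real.log (1 + Real.exp x) ≤ Real.log (2 * Real.exp (max x 0)) :=
        Real.log_le_log (by positivity) (by linarith)
    _ = Real.log 2 + max x 0 := by
        rw [Real.log_mul two_ne_zero (Real.exp_ne_zero _), Real.log_exp]

private lemma max_le_log' (x : ℝ) : max x 0 ≤ Real.log (1 + Real.exp x) := by
  have h : Real.exp (max x 0) ≤ 1 + Real.exp x := by
    rcases le_total x 0 with h | h
    · rw [max_eq_right h, Real.exp_zero]; linarith [Real.exp_pos x]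
    · rw [max_eq_left h]; linarith
  calc max x 0 = Real.log (Real.exp (max x 0)) := (Real.log_exp _).symm
    _ ≤ Real.log (1 + Real.exp x) := Real.log_le_log (Real.exp_pos _) h

private noncomputable def Fa (a t : ℝ) : ℝ := ∑' n : ℕ, max (t - a * ((n:ℝ)+1)^2) 0

private lemma max_term_vanish (a t : ℝ) (ha : 0 < a) {n : ℕ}
    (hn : ⌊Real.sqrt (max t 0 / a)⌋₊ ≤ n) : max (t - a * ((n:ℝ)+1)^2) 0 = 0 := by
  set N := ⌊Real.sqrt (max t 0 / a)⌋₊ with hN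
  apply max_eq_right
  have hx : Real.sqrt (max t 0 / a) < (N:ℝ) + 1 := Nat.lt_floor_add_one _
  have hnn : (0:ℝ) ≤ max t 0 / a := div_nonneg (le_max_right _ _) ha.le
  have hsq : Real.sqrt (max t 0 / a) ^ 2 = max t 0 / a := Real.sq_sqrt hnn
  have h2 : max t 0 / a < ((N:ℝ)+1)^2 := by
    nlinarith [Real.sqrt_nonneg (max t 0 / a)]
  have h3 : ((N:ℝ)+1)^2 ≤ ((n:ℝ)+1)^2 := by
    have : (N:ℝ) ≤ (n:ℝ) := Nat.cast_le.2 hn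
    nlinarith [Nat.cast_nonneg (α := ℝ) N]
  have h4 : max t 0 < a * ((n:ℝ)+1)^2 := by
    have := (div_lt_iff₀ ha).1 (lt_of_lt_of_le h2 h3)
    linarith
  have := le_max_left t 0
  linarith

private lemma summable_max' (a t : ℝ) (ha : 0 < a) :
    Summable (fun n : ℕ => max (t - a * ((n:ℝ)+1)^2) 0) := by
  apply summable_of_ne_finset_zero (s := Finset.range ⌊Real.sqrt (max t 0 / a)⌋₊)
  intro n hn
  rw [Finset.mem_range, not_lt] at hn
  exact max_term_vanish a t ha hn

private lemma Fa_eq (a : ℝ) (ha : 0 < a) (t : ℝ) (ht : 0 ≤ t) :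
    Fa a t = (⌊Real.sqrt (t/a)⌋₊ : ℝ) * t -
      a * ((⌊Real.sqrt (t/a)⌋₊:ℝ) * ((⌊Real.sqrt (t/a)⌋₊:ℝ)+1) * (2*(⌊Real.sqrt (t/a)⌋₊:ℝ)+1) / 6) := by
  have hmax : max t 0 = t := max_eq_left ht
  set N := ⌊Real.sqrt (t/a)⌋₊ with hN
  have hvanish : ∀ n ∉ Finset.range N, max (t - a * ((n:ℝ)+1)^2) 0 = 0 := by
    intro n hn
    rw [Finset.mem_range, not_lt] at hn
    exact max_term_vanish a t ha (by rwa [hmax])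
  rw [Fa, tsum_eq_sum hvanish]
  have heq : ∀ n ∈ Finset.range N, max (t - a * ((n:ℝ)+1)^2) 0 = t - a * ((n:ℝ)+1)^2 := by
    intro n hn
    rw [Finset.mem_range] at hn
    apply max_eq_left
    have h1 : ((n:ℝ)+1) ≤ (N:ℝ) := by exact_mod_cast Nat.succ_le_of_lt hn
    have h2 : (N:ℝ) ≤ Real.sqrt (t/a) := Nat.floor_le (Real.sqrt_nonneg _)
    have h3 : Real.sqrt (t/a) ^ 2 = t/a := Real.sq_sqrt (div_nonneg ht ha.le)
    have h4 : ((n:ℝ)+1)^2 ≤ t/a := by nlinarith [Nat.cast_nonneg (α := ℝ) n]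
    have h5 : a * ((n:ℝ)+1)^2 ≤ t := by
      have := (le_div_iff₀ ha).1 h4
      linarith
    linarith
  rw [Finset.sum_congr rfl heq, Finset.sum_sub_distrib, Finset.sum_const, Finset.card_range,
    ← Finset.mul_sum, sum_sq']
  push_cast
  ring

private lemma sqrt_tendsto_atTop : Tendsto Real.sqrt atTop atTop :=
  (tendsto_rpow_atTop (by norm_num : (0:ℝ) < 1/2)).congr
    (fun x => (Real.sqrt_eq_rpow x).symm)

private lemma v_tendsto (a : ℝ) (ha : 0 < a) :
    Tendsto (fun t : ℝ => (⌊Real.sqrt (t/a)⌋₊ : ℝ) / Real.sqrt t) atTop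
      (𝓝 (1/Real.sqrt a)) := by
  have hx : Tendsto (fun t : ℝ => Real.sqrt (t/a)) atTop atTop :=
    sqrt_tendsto_atTop.comp (tendsto_id.atTop_div_const ha)
  have h1 : Tendsto (fun t : ℝ =>
      (⌊Real.sqrt (t/a)⌋₊ : ℝ) / Real.sqrt (t/a) * (1/Real.sqrt a)) atTop
      (𝓝 (1 * (1/Real.sqrt a))) :=
    (tendsto_nat_floor_div_atTop.comp hx).mul_const _
  rw [one_mul] at h1
  apply h1.congr'
  filter_upwards [eventually_gt_atTop (0:ℝ)] with t ht
  have hta : 0 < t / a := div_pos ht ha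
  have hxpos : 0 < Real.sqrt (t/a) := Real.sqrt_pos.2 hta
  have hsa : 0 < Real.sqrt a := Real.sqrt_pos.2 ha
  have key : Real.sqrt t = Real.sqrt (t/a) * Real.sqrt a := by
    rw [← Real.sqrt_mul hta.le, div_mul_cancel₀ _ ha.ne']
  rw [key]
  field_simp

private lemma Fa_tendsto (a : ℝ) (ha : 0 < a) :
    Tendsto (fun t : ℝ => Fa a t / t ^ ((3:ℝ)/2)) atTop (𝓝 (2/(3*Real.sqrt a))) := by
  have hsa : 0 < Real.sqrt a := Real.sqrt_pos.2 ha
  have hv := v_tendsto a ha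
  have hinv : Tendsto (fun t : ℝ => 1/Real.sqrt t) atTop (𝓝 0) := by
    simpa [Function.comp_def] using tendsto_inv_atTop_zero.comp sqrt_tendsto_atTop
  set c := 1/Real.sqrt a with hc
  have hmain : Tendsto (fun t : ℝ =>
      (⌊Real.sqrt (t/a)⌋₊ : ℝ) / Real.sqrt t -
      a/6 * (((⌊Real.sqrt (t/a)⌋₊ : ℝ) / Real.sqrt t) *
        (((⌊Real.sqrt (t/a)⌋₊ : ℝ) / Real.sqrt t + 1/Real.sqrt t) *
         (2*((⌊Real.sqrt (t/a)⌋₊ : ℝ) / Real.sqrt t) + 1/Real.sqrt t)))) atTop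
      (𝓝 (c - a/6 * (c * ((c + 0) * (2*c + 0))))) :=
    hv.sub (tendsto_const_nhds.mul (hv.mul ((hv.add hinv).mul
      ((tendsto_const_nhds.mul hv).add hinv))))
  have hval : c - a/6 * (c * ((c + 0) * (2*c + 0))) = 2/(3*Real.sqrt a) := by
    have h : Real.sqrt a * Real.sqrt a = a := Real.mul_self_sqrt ha.le
    rw [hc]
    field_simp
    nlinarith [h, hsa]
  rw [hval] at hmain
  apply hmain.congr'
  filter_upwards [eventually_gt_atTop (0:ℝ)] with t ht
  have hst : 0 < Real.sqrt t := Real.sqrt_pos.2 ht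
  have hss : Real.sqrt t * Real.sqrt t = t := Real.mul_self_sqrt ht.le
  have hrp : t ^ ((3:ℝ)/2) = t * Real.sqrt t := by
    rw [show (3:ℝ)/2 = 1 + 1/2 by norm_num, Real.rpow_add ht, Real.rpow_one,
      ← Real.sqrt_eq_rpow]
  rw [Fa_eq a ha t ht.le, hrp]
  set N := (⌊Real.sqrt (t/a)⌋₊ : ℝ)
  field_simp
  ring_nf
  simp only [Real.sq_sqrt ht.le]
  ring

private lemma alg1 (b x y z c : ℝ) (hy : y ≠ 0) (hz : z ≠ 0) (hc : c ≠ 0) :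
    x / y * (y / z) * (b / c) = b * x / (c * z) := by field_simp

private lemma alg2 (c cm w : ℝ) (h : cm ≠ 0) : c * w = c / cm * (cm * w) := by
  field_simp

set_option maxHeartbeats 1000000 in
/-- Lemma: `ln Ξ_μ^{(V)}(Λ) = Σ_{k=1}^∞ ln(1 + e^{β(μ−ε_k)}) ∼ (2βΛ/(3π)) μ^{3/2}`
as `μ → ∞`. -/
theorem stmt_10 (β Λ C : ℝ) (hβ : 0 < β) (hΛ : 0 < Λ) (hC : 0 < C)
    (ε : ℕ+ → ℝ) (hpos : ∀ k : ℕ+, 0 < ε k)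
    (hε : ∀ k : ℕ+, |ε k - π ^ 2 * (k : ℕ) ^ 2 / Λ ^ 2| ≤ C) :
    Tendsto (fun μ : ℝ =>
        (∑' k : ℕ+, Real.log (1 + Real.exp (β * (μ - ε k)))) /
          (2 * β * Λ / (3 * π) * μ ^ ((3 : ℝ) / 2)))
      atTop (nhds 1) := by
  have hπ := Real.pi_pos
  set a : ℝ := π^2 / Λ^2 with ha_def
  have ha : 0 < a := by positivity
  have hsa : Real.sqrt a = π / Λ := by
    rw [ha_def, show π^2/Λ^2 = (π/Λ)^2 by ring, Real.sqrt_sq (by positivity)]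
  set r : ℝ := Real.exp (-(β*a)) with hr_def
  have hr0 : 0 ≤ r := (Real.exp_pos _).le
  have hr1 : r < 1 := by
    rw [hr_def, show (1:ℝ) = Real.exp 0 by simp]
    exact Real.exp_lt_exp.2 (by nlinarith)
  set cM : ℝ := 2 * β * Λ / (3 * π) with hcM_def
  have hcM : 0 < cM := by positivity
  -- bounds on ε
  have hεb : ∀ n : ℕ, a*((n:ℝ)+1)^2 - C ≤ ε n.succPNat ∧ ε n.succPNat ≤ a*((n:ℝ)+1)^2 + C := by
    intro n
    have h := abs_le.1 (hε n.succPNat)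
    have h2 : π ^ 2 * (((n.succPNat : ℕ)) : ℝ) ^ 2 / Λ ^ 2 = a * ((n:ℝ)+1)^2 := by
      rw [ha_def, Nat.succPNat_coe]; push_cast; ring
    rw [h2] at h
    exact ⟨by linarith [h.1], by linarith [h.2]⟩
  -- rewrite tsum over ℕ+
  have hrw : ∀ μ : ℝ, (∑' k : ℕ+, Real.log (1 + Real.exp (β * (μ - ε k)))) =
      ∑' n : ℕ, Real.log (1 + Real.exp (β * (μ - ε n.succPNat))) :=
    fun μ => (Equiv.pnatEquivNat.symm.tsum_eq
      (fun k : ℕ+ => Real.log (1 + Real.exp (β * (μ - ε k))))).symm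
  -- summability
  have hsummS : ∀ μ : ℝ,
      Summable (fun n : ℕ => Real.log (1 + Real.exp (β * (μ - ε n.succPNat)))) := by
    intro μ
    apply Summable.of_nonneg_of_le
      (f := fun n : ℕ => Real.exp (β*(μ + C)) * r^n)
    · intro n
      apply Real.log_nonneg
      linarith [Real.exp_pos (β*(μ - ε n.succPNat))]
    · intro n
      refine (log_le_exp' _).trans ?_
      rw [hr_def, ← Real.exp_nat_mul, ← Real.exp_add]
      apply Real.exp_le_exp.2
      have h1 := (hεb n).1
      have h2 : a*(n:ℝ) ≤ a*((n:ℝ)+1)^2 := by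
        nlinarith [mul_nonneg ha.le (show (0:ℝ) ≤ (n:ℝ)^2+(n:ℝ)+1 by positivity)]
      have h4 : μ - ε n.succPNat ≤ μ + C - a*(n:ℝ) := by linarith
      calc β * (μ - ε n.succPNat) ≤ β * (μ + C - a*(n:ℝ)) :=
            mul_le_mul_of_nonneg_left h4 hβ.le
        _ = β*(μ + C) + (n:ℝ) * -(β*a) := by ring
    · exact (summable_geometric_of_lt_one hr0 hr1).mul_left _
  -- lower bound
  have hlow : ∀ μ : ℝ, β * Fa a (μ - C) ≤
      ∑' n : ℕ, Real.log (1 + Real.exp (β * (μ - ε n.succPNat))) := by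
    intro μ
    rw [Fa, ← tsum_mul_left]
    refine Summable.tsum_le_tsum ?_ ((summable_max' a (μ-C) ha).mul_left β) (hsummS μ)
    intro n
    rw [mul_max_of_nonneg _ _ hβ.le, mul_zero]
    refine le_trans ?_ (max_le_log' _)
    refine max_le_max ?_ le_rfl
    refine mul_le_mul_of_nonneg_left ?_ hβ.le
    linarith [(hεb n).2]
  -- upper bound
  have hupp : ∀ μ : ℝ, 0 ≤ μ →
      (∑' n : ℕ, Real.log (1 + Real.exp (β * (μ - ε n.succPNat)))) ≤
      β * Fa a (μ + C) +
        (((⌊Real.sqrt ((μ+C)/a)⌋₊ + 1 : ℕ) : ℝ) * Real.log 2 + (1 - r)⁻¹) := by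
    intro μ hμ
    set K : ℕ := ⌊Real.sqrt ((μ+C)/a)⌋₊ + 1 with hK
    have hKbig : μ + C < a * (K:ℝ)^2 := by
      have hx : Real.sqrt ((μ+C)/a) < (K:ℝ) := by
        rw [hK]; push_cast; exact Nat.lt_floor_add_one _
      have hnn : 0 ≤ (μ+C)/a := div_nonneg (by linarith) ha.le
      have hsq := Real.sq_sqrt hnn
      have h5 : (μ+C)/a < (K:ℝ)^2 := by nlinarith [Real.sqrt_nonneg ((μ+C)/a)]
      calc μ + C = ((μ+C)/a) * a := by field_simp
        _ < (K:ℝ)^2 * a := by nlinarith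
        _ = a*(K:ℝ)^2 := by ring
    have s1 : Summable (fun n : ℕ => β * max (μ + C - a*((n:ℝ)+1)^2) 0) :=
      (summable_max' a (μ+C) ha).mul_left β
    have s2a : Summable (fun n : ℕ => if n < K then Real.log 2 else 0) := by
      apply summable_of_ne_finset_zero (s := Finset.range K)
      intro n hn; rw [Finset.mem_range] at hn; simp [hn]
    have s2b : Summable (fun n : ℕ => r^n) := summable_geometric_of_lt_one hr0 hr1
    have hle : ∀ n : ℕ, Real.log (1 + Real.exp (β * (μ - ε n.succPNat))) ≤
        β * max (μ + C - a*((n:ℝ)+1)^2) 0 + ((if n < K then Real.log 2 else 0) + r^n) := by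
      intro n
      have hmax0 : 0 ≤ β * max (μ + C - a*((n:ℝ)+1)^2) 0 := by positivity
      by_cases hn : n < K
      · rw [if_pos hn]
        have h2 := log_le_max' (β*(μ - ε n.succPNat))
        have h3 : max (β*(μ - ε n.succPNat)) 0 ≤ β * max (μ + C - a*((n:ℝ)+1)^2) 0 := by
          rw [mul_max_of_nonneg _ _ hβ.le, mul_zero]
          refine max_le_max ?_ le_rfl
          refine mul_le_mul_of_nonneg_left ?_ hβ.le
          linarith [(hεb n).1]
        have hrn : 0 ≤ r^n := pow_nonneg hr0 n
        linarith
      · rw [if_neg hn]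
        push_neg at hn
        have h2 := log_le_exp' (β*(μ - ε n.succPNat))
        have h3 : Real.exp (β*(μ - ε n.succPNat)) ≤ r^n := by
          rw [hr_def, ← Real.exp_nat_mul]
          apply Real.exp_le_exp.2
          have h4 := (hεb n).1
          have h5 : (K:ℝ) ≤ (n:ℝ) := Nat.cast_le.2 hn
          have hK0 : (0:ℝ) ≤ (K:ℝ) := Nat.cast_nonneg K
          have hsq : (K:ℝ)^2 ≤ (n:ℝ)^2 := by nlinarith
          have h7 : μ - ε n.succPNat ≤ -(a*(n:ℝ)) := by nlinarith [Nat.cast_nonneg (α:=ℝ) n]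
          calc β * (μ - ε n.succPNat) ≤ β * (-(a*(n:ℝ))) :=
                mul_le_mul_of_nonneg_left h7 hβ.le
            _ = (n:ℝ) * -(β*a) := by ring
        linarith
    calc (∑' n : ℕ, Real.log (1 + Real.exp (β * (μ - ε n.succPNat))))
        ≤ ∑' n : ℕ, (β * max (μ + C - a*((n:ℝ)+1)^2) 0 +
            ((if n < K then Real.log 2 else 0) + r^n)) :=
          Summable.tsum_le_tsum hle (hsummS μ) (s1.add (s2a.add s2b))
      _ = (∑' n : ℕ, β * max (μ + C - a*((n:ℝ)+1)^2) 0) +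
            ((∑' n : ℕ, if n < K then Real.log 2 else 0) + ∑' n : ℕ, r^n) := by
          rw [Summable.tsum_add s1 (s2a.add s2b), Summable.tsum_add s2a s2b]
      _ = β * Fa a (μ + C) + (((K:ℕ):ℝ) * Real.log 2 + (1 - r)⁻¹) := by
          rw [tsum_mul_left, tsum_geometric_of_lt_one hr0 hr1]
          congr 2
          rw [tsum_eq_sum (s := Finset.range K)
            (by intro n hn; rw [Finset.mem_range] at hn; simp [hn])]
          rw [Finset.sum_congr rfl (fun n hn => if_pos (Finset.mem_range.1 hn)),
            Finset.sum_const, Finset.card_range, nsmul_eq_mul]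
  -- limits of the bounding functions
  have hshift : ∀ d : ℝ, Tendsto (fun μ : ℝ =>
      β * Fa a (μ + d) / (cM * μ^((3:ℝ)/2))) atTop (𝓝 1) := by
    intro d
    have hA : Tendsto (fun μ : ℝ => Fa a (μ + d) / (μ + d)^((3:ℝ)/2)) atTop
        (𝓝 (2/(3*Real.sqrt a))) :=
      (Fa_tendsto a ha).comp (tendsto_atTop_add_const_right _ d tendsto_id)
    have hq : Tendsto (fun μ : ℝ => (μ + d)/μ) atTop (𝓝 1) := by
      have h0 : Tendsto (fun μ : ℝ => 1 + d * μ⁻¹) atTop (𝓝 (1 + d * 0)) :=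
        tendsto_const_nhds.add (tendsto_const_nhds.mul tendsto_inv_atTop_zero)
      rw [mul_zero, add_zero] at h0
      apply h0.congr'
      filter_upwards [eventually_gt_atTop (0:ℝ)] with μ hμ
      field_simp
    have hB : Tendsto (fun μ : ℝ => ((μ + d)/μ)^((3:ℝ)/2)) atTop (𝓝 1) := by
      have hct : ContinuousAt (fun x : ℝ => x ^ ((3:ℝ)/2)) 1 :=
        Real.continuousAt_rpow_const 1 _ (Or.inl one_ne_zero)
      have := hct.tendsto.comp hq
      rwa [Real.one_rpow] at this
    have hval : (2/(3*Real.sqrt a)) * 1 * (β/cM) = 1 := by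
      rw [hsa, hcM_def]
      field_simp
    have hprod := (hA.mul hB).mul_const (β/cM)
    rw [hval] at hprod
    apply hprod.congr'
    filter_upwards [eventually_gt_atTop (max 0 (-d) + 1)] with μ hμ
    have hμ0 : 0 < μ := lt_of_le_of_lt (le_max_left 0 (-d)) (by linarith)
    have hμd : 0 < μ + d := by
      have := le_max_right 0 (-d); nlinarith [lt_of_le_of_lt (le_max_right 0 (-d)) (show max 0 (-d) < μ by linarith)]
    have h1 : (0:ℝ) < (μ + d)^((3:ℝ)/2) := Real.rpow_pos_of_pos hμd _
    have h2 : (0:ℝ) < μ^((3:ℝ)/2) := Real.rpow_pos_of_pos hμ0 _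
    rw [Real.div_rpow hμd.le hμ0.le]
    exact alg1 β (Fa a (μ+d)) ((μ+d)^((3:ℝ)/2)) (μ^((3:ℝ)/2)) cM h1.ne' h2.ne' hcM.ne'
  -- error term limit
  have hE : Tendsto (fun μ : ℝ =>
      (((⌊Real.sqrt ((μ+C)/a)⌋₊ + 1 : ℕ) : ℝ) * Real.log 2 + (1 - r)⁻¹) /
        (cM * μ^((3:ℝ)/2))) atTop (𝓝 0) := by
    set c' : ℝ := (Real.sqrt (2/a) + 1) * Real.log 2 + (1 - r)⁻¹ with hc'
    have hlog2 : 0 ≤ Real.log 2 := Real.log_nonneg one_le_two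
    have hrinv : 0 ≤ (1 - r)⁻¹ := inv_nonneg.2 (by linarith)
    have h0 : Tendsto (fun μ : ℝ => (c'/cM) / μ) atTop (𝓝 0) :=
      tendsto_const_nhds.div_atTop tendsto_id
    apply squeeze_zero' (g := fun μ : ℝ => (c'/cM) / μ)
    · filter_upwards [eventually_gt_atTop (0:ℝ)] with μ hμ
      have h2 : (0:ℝ) < μ^((3:ℝ)/2) := Real.rpow_pos_of_pos hμ _
      positivity
    · filter_upwards [eventually_ge_atTop (max C 1)] with μ hμ
      have hμ1 : (1:ℝ) ≤ μ := le_trans (le_max_right C 1) hμ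
      have hμC : C ≤ μ := le_trans (le_max_left C 1) hμ
      have hμ0 : (0:ℝ) < μ := by linarith
      have hsμ : (1:ℝ) ≤ Real.sqrt μ := by
        rw [show (1:ℝ) = Real.sqrt 1 by simp]
        exact Real.sqrt_le_sqrt hμ1
      have hKb : (((⌊Real.sqrt ((μ+C)/a)⌋₊ + 1 : ℕ) : ℝ)) ≤
          (Real.sqrt (2/a) + 1) * Real.sqrt μ := by
        push_cast
        have h1 : (⌊Real.sqrt ((μ+C)/a)⌋₊ : ℝ) ≤ Real.sqrt ((μ+C)/a) :=
          Nat.floor_le (Real.sqrt_nonneg _)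
        have h2 : Real.sqrt ((μ+C)/a) ≤ Real.sqrt ((2/a) * μ) := by
          apply Real.sqrt_le_sqrt
          rw [show (2/a) * μ = (2*μ)/a by ring]
          exact (div_le_div_iff_of_pos_right ha).2 (by linarith)
        rw [Real.sqrt_mul (by positivity) μ] at h2
        nlinarith [Real.sqrt_nonneg (2/a)]
      have hMeq : μ^((3:ℝ)/2) = μ * Real.sqrt μ := by
        rw [show (3:ℝ)/2 = 1 + 1/2 by norm_num, Real.rpow_add hμ0, Real.rpow_one,
          ← Real.sqrt_eq_rpow]
      have hnum : (((⌊Real.sqrt ((μ+C)/a)⌋₊ + 1 : ℕ) : ℝ)) * Real.log 2 + (1 - r)⁻¹ ≤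
          c' * Real.sqrt μ := by
        rw [hc']
        have := mul_le_mul_of_nonneg_right hKb hlog2
        nlinarith [hrinv, hsμ, Real.sqrt_nonneg (2/a)]
      rw [hMeq, div_le_div_iff₀ (by positivity) hμ0]
      calc ((((⌊Real.sqrt ((μ+C)/a)⌋₊ + 1 : ℕ) : ℝ)) * Real.log 2 + (1 - r)⁻¹) * μ
          ≤ c' * Real.sqrt μ * μ := by
            apply mul_le_mul_of_nonneg_right hnum hμ0.le
        _ = c' * (μ * Real.sqrt μ) := by ring
        _ = c'/cM * (cM * (μ * Real.sqrt μ)) := alg2 _ _ _ hcM.ne'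
    · exact h0
  -- assemble by squeeze
  have hupp_lim : Tendsto (fun μ : ℝ =>
      β * Fa a (μ + C) / (cM * μ^((3:ℝ)/2)) +
      (((⌊Real.sqrt ((μ+C)/a)⌋₊ + 1 : ℕ) : ℝ) * Real.log 2 + (1 - r)⁻¹) /
        (cM * μ^((3:ℝ)/2))) atTop (𝓝 1) := by
    have := (hshift C).add hE
    rwa [add_zero] at this
  have hlow_lim := hshift (-C)
  apply tendsto_of_tendsto_of_tendsto_of_le_of_le' hlow_lim hupp_lim
  · filter_upwards [eventually_gt_atTop (0:ℝ)] with μ hμ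
    have hM : 0 < cM * μ^((3:ℝ)/2) := by
      have := Real.rpow_pos_of_pos hμ ((3:ℝ)/2); positivity
    rw [hrw μ, show μ + -C = μ - C by ring]
    exact (div_le_div_iff_of_pos_right hM).2 (hlow μ)
  · filter_upwards [eventually_gt_atTop (0:ℝ)] with μ hμ
    have hM : 0 < cM * μ^((3:ℝ)/2) := by
      have := Real.rpow_pos_of_pos hμ ((3:ℝ)/2); positivity
    rw [hrw μ, ← add_div]
    exact (div_le_div_iff_of_pos_right hM).2 (hupp μ hμ.le)
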